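/- Let S be a 𝒞-semigroup with extremal rays τ₁,…,τ_t and M = {m₁,…,m_t} ⊆ S \ {0} with m_i ∈ τ_i for each i. Then the set of I(S)-semigroups T that are 𝒞-semigroups whose i-multiplicities satisfy mult_i(T) = m_i for all i is non-empty and finite. -/

import Mathlib

open Pointwise

/-- `S` is an affine semigroup: a finitely generated additive submonoid of `ℕ^p`
(containing `0`). -/
def IsAffine {p : ℕ} (S : Set (Fin p → ℕ)) : Prop :=
  ∃ F : Finset (Fin p → ℕ),
    S = (AddSubmonoid.closure (F : Set (Fin p → ℕ)) : Set (Fin p → ℕ))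

/-- The set of integer points of the rational cone generated by `S`:
`x` is a non-negative rational combination of elements of `S` iff some positive
multiple of `x` lies in the additive monoid generated by `S`. -/
def coneOf {p : ℕ} (S : Set (Fin p → ℕ)) : Set (Fin p → ℕ) :=
  {x | ∃ n : ℕ, 0 < n ∧ n • x ∈ AddSubmonoid.closure S}

/-- A `𝒞`-semigroup: an affine semigroup with finite complement in its cone. -/
def CSemigroup {p : ℕ} (S : Set (Fin p → ℕ)) : Prop :=
  IsAffine S ∧ (coneOf S \ S).Finite

/-- `P` is an ideal of `S`: `P ⊆ S` and `P + S ⊆ P`. -/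
def IsIdealOf {p : ℕ} (S P : Set (Fin p → ℕ)) : Prop :=
  P ⊆ S ∧ P + S ⊆ P

/-- `x ≤_S y` iff `y - x ∈ S`. -/
def leS {p : ℕ} (S : Set (Fin p → ℕ)) (x y : Fin p → ℕ) : Prop :=
  ∃ s ∈ S, x + s = y

/-- A non-empty subset `X ⊆ S` is `S`-incomparable if `x - x' ∉ S` for all
distinct `x, x' ∈ X`. -/
def SIncomparable {p : ℕ} (S X : Set (Fin p → ℕ)) : Prop :=
  X.Nonempty ∧ X ⊆ S ∧ ∀ x ∈ X, ∀ x' ∈ X, x ≠ x' → ¬ leS S x' x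

/-- The minimal generating set of `T`: non-zero elements of `T` that are not a
sum of two non-zero elements of `T`. -/
def msg {p : ℕ} (T : Set (Fin p → ℕ)) : Set (Fin p → ℕ) :=
  {x ∈ T | x ≠ 0 ∧ ¬ ∃ a ∈ T, ∃ b ∈ T, a ≠ 0 ∧ b ≠ 0 ∧ x = a + b}

/-- The Apery set `Ap(S, m) = {s ∈ S : s - m ∉ S}`. -/
def Ap {p : ℕ} (S : Set (Fin p → ℕ)) (m : Fin p → ℕ) : Set (Fin p → ℕ) :=
  {s ∈ S | ¬ ∃ u ∈ S, m + u = s}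

/-- `τ` is an extremal ray of the cone `C`: the set of points of `C` lying on the
ray spanned by some non-zero `v ∈ C`, such that whenever a sum of two elements of
`C` lies in `τ`, both summands lie in `τ`. -/
def IsExtremalRay {p : ℕ} (C τ : Set (Fin p → ℕ)) : Prop :=
  (∃ v : Fin p → ℕ, v ≠ 0 ∧ v ∈ C ∧
    τ = {x ∈ C | ∃ a b : ℕ, 0 < b ∧ b • x = a • v}) ∧
  ∀ x ∈ C, ∀ y ∈ C, x + y ∈ τ → x ∈ τ ∧ y ∈ τ

/-- `τ 1, …, τ t` are (exactly) the extremal rays of the cone `C`. -/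
def RaysOf {p t : ℕ} (C : Set (Fin p → ℕ)) (τ : Fin t → Set (Fin p → ℕ)) : Prop :=
  (∀ i, IsExtremalRay C (τ i)) ∧ Function.Injective τ ∧
    ∀ ρ, IsExtremalRay C ρ → ∃ i, ρ = τ i

/-- `m` is the `i`-multiplicity of `T` along the ray `τ`: the minimum non-zero
element of `τ ∩ T` for the componentwise order. -/
def MultOn {p : ℕ} (τ T : Set (Fin p → ℕ)) (m : Fin p → ℕ) : Prop :=
  m ∈ τ ∧ m ∈ T ∧ m ≠ 0 ∧ ∀ x ∈ τ ∩ T, x ≠ 0 → m ≤ x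

/-- `T` is an `I(S)`-semigroup: an affine semigroup such that `T \ {0}` is an
ideal of `S`. -/
def ISemigroupOf {p : ℕ} (S T : Set (Fin p → ℕ)) : Prop :=
  IsAffine T ∧ 0 ∈ T ∧ IsIdealOf S (T \ {0})

/-- `le` is a monomial order on `ℕ^p`: a total order compatible with addition in
which `0` is the least element. -/
def IsMonomialOrder {p : ℕ} (le : (Fin p → ℕ) → (Fin p → ℕ) → Prop) : Prop :=
  (∀ x, le x x) ∧ (∀ x y z, le x y → le y z → le x z) ∧
  (∀ x y, le x y → le y x → x = y) ∧ (∀ x y, le x y ∨ le y x) ∧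
  (∀ x y z, le x y → le (x + z) (y + z)) ∧ (∀ x, le 0 x)

/-- The pseudo-Frobenius elements of `T`. -/
def PF {p : ℕ} (T : Set (Fin p → ℕ)) : Set (Fin p → ℕ) :=
  {x ∈ coneOf T \ T | ∀ y ∈ T, y ≠ 0 → x + y ∈ T}

namespace St14
variable {p : ℕ}
def ι {p : ℕ} (v : Fin p → ℕ) : Fin p → ℚ := fun k => (v k : ℚ)
lemma ι_inj : Function.Injective (ι (p := p)) := fun a b h =>
  funext fun k => Nat.cast_injective (congrFun h k)
lemma ι_add (a b : Fin p → ℕ) : ι (a + b) = ι a + ι b := by funext k; simp [ι]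
lemma ι_zero : ι (0 : Fin p → ℕ) = 0 := by funext k; simp [ι]
lemma ι_nsmul (n : ℕ) (a : Fin p → ℕ) : ι (n • a) = (n : ℚ) • ι a := by
  funext k; simp [ι, mul_comm]
lemma ι_nonneg (a : Fin p → ℕ) : (0 : Fin p → ℚ) ≤ ι a := by intro k; simp [ι]
lemma ι_eq_zero {a : Fin p → ℕ} (h : ι a = 0) : a = 0 := by
  apply ι_inj; rw [h, ι_zero]
def cQ (F : Finset (Fin p → ℕ)) : Set (Fin p → ℚ) :=
  {x | ∃ c : (Fin p → ℕ) → ℚ, (∀ f, 0 ≤ c f) ∧ x = ∑ f ∈ F, c f • ι f}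
lemma zero_mem_cQ (F : Finset (Fin p → ℕ)) : (0 : Fin p → ℚ) ∈ cQ F :=
  ⟨0, fun _ => le_refl _, by simp⟩
lemma add_mem_cQ {F : Finset (Fin p → ℕ)} {x y : Fin p → ℚ}
    (hx : x ∈ cQ F) (hy : y ∈ cQ F) : x + y ∈ cQ F := by
  obtain ⟨c, hc, rfl⟩ := hx
  obtain ⟨d, hd, rfl⟩ := hy
  exact ⟨c + d, fun f => add_nonneg (hc f) (hd f), by
    rw [← Finset.sum_add_distrib]; congr 1; funext f; simp [add_smul]⟩
lemma smul_mem_cQ {F : Finset (Fin p → ℕ)} {x : Fin p → ℚ} {q : ℚ}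
    (hq : 0 ≤ q) (hx : x ∈ cQ F) : q • x ∈ cQ F := by
  obtain ⟨c, hc, rfl⟩ := hx
  exact ⟨fun f => q * c f, fun f => mul_nonneg hq (hc f), by
    rw [Finset.smul_sum]; congr 1; funext f; rw [smul_smul]⟩
lemma gen_mem_cQ {F : Finset (Fin p → ℕ)} {f : Fin p → ℕ} (hf : f ∈ F) :
    ι f ∈ cQ F := by
  refine ⟨fun g => if g = f then 1 else 0, fun g => by positivity, ?_⟩
  rw [Finset.sum_eq_single f]
  · simp
  · intro b _ hb; simp [hb]
  · intro h; exact absurd hf h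
lemma cQ_subset {F G : Finset (Fin p → ℕ)} (h : ∀ f ∈ F, ι f ∈ cQ G) :
    cQ F ⊆ cQ G := by
  rintro x ⟨c, hc, rfl⟩
  refine Finset.sum_induction _ (· ∈ cQ G) (fun a b ha hb => add_mem_cQ ha hb)
    (zero_mem_cQ G) ?_
  intro f hf
  exact smul_mem_cQ (hc f) (h f hf)
lemma cQ_mono {F G : Finset (Fin p → ℕ)} (h : F ⊆ G) : cQ F ⊆ cQ G :=
  cQ_subset fun f hf => gen_mem_cQ (h hf)
lemma cQ_nonneg {F : Finset (Fin p → ℕ)} {x : Fin p → ℚ} (hx : x ∈ cQ F) :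
    (0 : Fin p → ℚ) ≤ x := by
  obtain ⟨c, hc, rfl⟩ := hx
  intro k
  simp only [Finset.sum_apply, Pi.zero_apply, Pi.smul_apply, smul_eq_mul]
  exact Finset.sum_nonneg fun f _ => mul_nonneg (hc f) (by simp [ι])
lemma mem_closureF {F : Finset (Fin p → ℕ)} {x : Fin p → ℕ} :
    x ∈ AddSubmonoid.closure (F : Set (Fin p → ℕ)) ↔
      ∃ c : (Fin p → ℕ) → ℕ, x = ∑ f ∈ F, c f • f := by
  have h : AddSubmonoid.closure (F : Set (Fin p → ℕ)) =
      (Submodule.span ℕ (F : Set (Fin p → ℕ))).toAddSubmonoid :=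
    (Submodule.span_nat_eq_addSubmonoidClosure _).symm
  rw [h]
  constructor
  · intro hx
    obtain ⟨c, -, hc⟩ := Submodule.mem_span_finset.1 hx
    exact ⟨c, hc.symm⟩
  · rintro ⟨c, rfl⟩
    exact (Submodule.sum_mem _ fun f hf => Submodule.smul_mem _ _ (Submodule.subset_span hf) :
      _ ∈ Submodule.span ℕ (F : Set (Fin p → ℕ)))

-- new part
lemma ι_mem_cQ_of_closure {F : Finset (Fin p → ℕ)} {x : Fin p → ℕ}
    (hx : x ∈ AddSubmonoid.closure (F : Set (Fin p → ℕ))) : ι x ∈ cQ F := by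
  obtain ⟨c, rfl⟩ := mem_closureF.1 hx
  refine ⟨fun f => (c f : ℚ), fun f => by positivity, ?_⟩
  funext k
  simp only [ι, Finset.sum_apply, Pi.smul_apply, smul_eq_mul]
  push_cast
  rfl

lemma rat_den_clear {q : ℚ} (hq : 0 ≤ q) {n : ℕ} (hd : q.den ∣ n) :
    ∃ k : ℕ, (k : ℚ) = n * q := by
  obtain ⟨e, rfl⟩ := hd
  refine ⟨e * q.num.toNat, ?_⟩
  have hden : ((q.den : ℚ)) ≠ 0 := by exact_mod_cast q.den_ne_zero
  have hnum : q * (q.den : ℚ) = (q.num : ℚ) := by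
    nth_rewrite 1 [← Rat.num_div_den q]
    exact div_mul_cancel₀ _ hden
  have h0 : (q.num.toNat : ℚ) = (q.num : ℚ) := by
    have := Rat.num_nonneg.2 hq
    exact_mod_cast Int.toNat_of_nonneg this
  push_cast
  rw [h0, ← hnum]
  ring

lemma cQ_clear_denoms {F : Finset (Fin p → ℕ)} {x : Fin p → ℚ} (hx : x ∈ cQ F) :
    ∃ (n : ℕ) (k : (Fin p → ℕ) → ℕ), 0 < n ∧
      (n : ℚ) • x = ι (∑ f ∈ F, k f • f) := by
  obtain ⟨c, hc, rfl⟩ := hx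
  set n := ∏ f ∈ F, (c f).den with hn
  have hnpos : 0 < n := Finset.prod_pos fun f _ => (c f).pos
  have hdvd : ∀ f ∈ F, (c f).den ∣ n := fun f hf => Finset.dvd_prod_of_mem _ hf
  have hex : ∀ f, ∃ k : ℕ, f ∈ F → (k : ℚ) = n * c f := by
    intro f
    by_cases hf : f ∈ F
    · obtain ⟨k, hk⟩ := rat_den_clear (hc f) (hdvd f hf)
      exact ⟨k, fun _ => hk⟩
    · exact ⟨0, fun h => absurd h hf⟩
  choose k hk using hex
  refine ⟨n, k, hnpos, ?_⟩
  funext j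
  simp only [ι, Finset.sum_apply, Pi.smul_apply, smul_eq_mul]
  push_cast
  rw [Finset.mul_sum]
  refine Finset.sum_congr rfl fun f hf => ?_
  have h := hk f hf
  rw [h]; ring

lemma coneOf_closure_eq {F : Finset (Fin p → ℕ)} :
    coneOf ((AddSubmonoid.closure (F : Set (Fin p → ℕ)) : AddSubmonoid _) :
      Set (Fin p → ℕ)) =
      {x | ∃ n : ℕ, 0 < n ∧ n • x ∈ AddSubmonoid.closure (F : Set (Fin p → ℕ))} := by
  unfold coneOf
  rw [AddSubmonoid.closure_eq]

lemma mem_coneOf_of_cQ {F : Finset (Fin p → ℕ)} {S : Set (Fin p → ℕ)}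
    (hS : S = (AddSubmonoid.closure (F : Set (Fin p → ℕ)) : Set (Fin p → ℕ)))
    {x : Fin p → ℕ} (hx : ι x ∈ cQ F) : x ∈ coneOf S := by
  subst hS
  rw [coneOf_closure_eq]
  obtain ⟨n, k, hn, hnk⟩ := cQ_clear_denoms hx
  refine ⟨n, hn, ?_⟩
  have : ι (n • x) = ι (∑ f ∈ F, k f • f) := by rw [ι_nsmul]; exact hnk
  rw [ι_inj this]
  exact mem_closureF.2 ⟨k, rfl⟩

lemma cQ_of_mem_coneOf {F : Finset (Fin p → ℕ)} {S : Set (Fin p → ℕ)}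
    (hS : S = (AddSubmonoid.closure (F : Set (Fin p → ℕ)) : Set (Fin p → ℕ)))
    {x : Fin p → ℕ} (hx : x ∈ coneOf S) : ι x ∈ cQ F := by
  subst hS
  rw [coneOf_closure_eq] at hx
  obtain ⟨n, hn, hnx⟩ := hx
  have h1 : ι (n • x) ∈ cQ F := ι_mem_cQ_of_closure hnx
  have h2 : ((n : ℚ)⁻¹) • ι (n • x) = ι x := by
    rw [ι_nsmul, smul_smul, inv_mul_cancel₀ (by exact_mod_cast hn.ne'), one_smul]
  rw [← h2]
  exact smul_mem_cQ (by positivity) h1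

lemma exists_min (F : Finset (Fin p → ℕ)) :
    ∃ F₀ ⊆ F, cQ F₀ = cQ F ∧ ∀ f ∈ F₀, ι f ∉ cQ (F₀.erase f) := by
  induction F using Finset.strongInduction with
  | _ F ih =>
    by_cases h : ∀ f ∈ F, ι f ∉ cQ (F.erase f)
    · exact ⟨F, le_refl _, rfl, h⟩
    · push_neg at h
      obtain ⟨f, hf, hfc⟩ := h
      obtain ⟨F₀, hsub, heq, hirr⟩ := ih (F.erase f) (Finset.erase_ssubset hf)
      refine ⟨F₀, hsub.trans (Finset.erase_subset _ _), ?_, hirr⟩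
      rw [heq]
      apply le_antisymm (cQ_mono (Finset.erase_subset _ _))
      apply cQ_subset
      intro g hg
      by_cases hgf : g = f
      · subst hgf; exact hfc
      · exact gen_mem_cQ (Finset.mem_erase.2 ⟨hgf, hg⟩)

lemma term_zero_of_sum_zero {F : Finset (Fin p → ℕ)} {c : (Fin p → ℕ) → ℚ}
    (hc : ∀ f, 0 ≤ c f) (h : ∑ f ∈ F, c f • ι f = 0) :
    ∀ f ∈ F, c f • ι f = 0 := by
  intro f hf
  funext k
  have hk : ∑ g ∈ F, (c g • ι g) k = 0 := by
    have h2 := congrFun h k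
    simpa [Finset.sum_apply] using h2
  have := (Finset.sum_eq_zero_iff_of_nonneg (fun g _ =>
    by simpa [ι] using mul_nonneg (hc g) (by simp [ι] : (0:ℚ) ≤ (g k : ℚ)))).1 hk
  exact this f hf

/-- core extremality lemma for irredundant generating sets -/
lemma ext_core {F₀ : Finset (Fin p → ℕ)}
    (hirr : ∀ f ∈ F₀, ι f ∉ cQ (F₀.erase f)) {f₀ : Fin p → ℕ} (hf₀ : f₀ ∈ F₀)
    {x y : Fin p → ℚ} (hx : x ∈ cQ F₀) (hy : y ∈ cQ F₀) {q : ℚ} (hq : 0 ≤ q)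
    (hsum : x + y = q • ι f₀) :
    (∃ r : ℚ, 0 ≤ r ∧ x = r • ι f₀) ∧ (∃ r : ℚ, 0 ≤ r ∧ y = r • ι f₀) := by
  obtain ⟨a, ha, rfl⟩ := hx
  obtain ⟨b, hb, rfl⟩ := hy
  set c : (Fin p → ℕ) → ℚ := fun g => a g + b g with hcdef
  have hc : ∀ g, 0 ≤ c g := fun g => add_nonneg (ha g) (hb g)
  have hcsum : ∑ g ∈ F₀, c g • ι g = q • ι f₀ := by
    rw [← hsum, ← Finset.sum_add_distrib]
    exact Finset.sum_congr rfl fun g _ => by simp [hcdef, add_smul]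
  have hsplit : c f₀ • ι f₀ + ∑ g ∈ F₀.erase f₀, c g • ι g = q • ι f₀ := by
    rw [Finset.add_sum_erase _ (fun g => c g • ι g) hf₀]; exact hcsum
  by_cases hcase : q ≤ c f₀
  · -- all other coefficients vanish
    have hrest : ∑ g ∈ F₀.erase f₀, c g • ι g = (q - c f₀) • ι f₀ := by
      rw [sub_smul]; rw [← hsplit]; abel
    have hzero : ∑ g ∈ F₀.erase f₀, c g • ι g = 0 := by
      funext k
      have h1 : 0 ≤ (∑ g ∈ F₀.erase f₀, c g • ι g) k := by
        rw [Finset.sum_apply]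
        exact Finset.sum_nonneg fun g _ => by
          simpa [ι] using mul_nonneg (hc g) (by simp [ι] : (0:ℚ) ≤ (g k : ℚ))
      have h2 : ((q - c f₀) • ι f₀) k ≤ 0 := by
        simp only [Pi.smul_apply, smul_eq_mul]
        exact mul_nonpos_of_nonpos_of_nonneg (by linarith) (by simp [ι])
      rw [hrest] at h1 ⊢
      exact le_antisymm h2 h1
    have hterm := term_zero_of_sum_zero (fun g => hc g) hzero
    have hczero : ∀ g ∈ F₀.erase f₀, c g = 0 := by
      intro g hg
      by_contra hne
      have hg0 : ι g = 0 := by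
        have := hterm g hg
        have := smul_eq_zero.1 this
        tauto
      have : g = 0 := ι_eq_zero hg0
      have : ι g ∈ cQ (F₀.erase g) := by rw [hg0]; exact zero_mem_cQ _
      exact hirr g (Finset.mem_of_mem_erase hg) this
    have key : ∀ (d : (Fin p → ℕ) → ℚ), (∀ g, 0 ≤ d g) → (∀ g, d g ≤ c g) →
        ∃ r : ℚ, 0 ≤ r ∧ ∑ g ∈ F₀, d g • ι g = r • ι f₀ := by
      intro d hd hdc
      refine ⟨d f₀, hd f₀, ?_⟩
      rw [← Finset.add_sum_erase _ (fun g => d g • ι g) hf₀]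
      have : ∑ g ∈ F₀.erase f₀, d g • ι g = 0 := by
        apply Finset.sum_eq_zero
        intro g hg
        have : d g = 0 := le_antisymm (by rw [← hczero g hg]; exact hdc g) (hd g)
        rw [this, zero_smul]
      rw [this, add_zero]
    refine ⟨key a ha fun g => by simp [hcdef]; exact hb g, ?_⟩
    exact key b hb fun g => by simp [hcdef]; exact ha g
  · -- contradiction with irredundancy
    exfalso
    push_neg at hcase
    have hpos : 0 < q - c f₀ := by linarith
    have hrest : (q - c f₀) • ι f₀ = ∑ g ∈ F₀.erase f₀, c g • ι g := by
      rw [sub_smul]; rw [← hsplit]; abel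
    have : ι f₀ = ∑ g ∈ F₀.erase f₀, ((q - c f₀)⁻¹ * c g) • ι g := by
      have := congrArg (fun z => (q - c f₀)⁻¹ • z) hrest
      simp only [smul_smul, inv_mul_cancel₀ hpos.ne', one_smul] at this
      rw [this, Finset.smul_sum]
      exact Finset.sum_congr rfl fun g _ => by rw [smul_smul]
    exact hirr f₀ hf₀ ⟨_, fun g => mul_nonneg (by positivity) (hc g), this⟩

def ray {p : ℕ} (C : Set (Fin p → ℕ)) (v : Fin p → ℕ) : Set (Fin p → ℕ) :=
  {x ∈ C | ∃ a b : ℕ, 0 < b ∧ b • x = a • v}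

lemma rat_ray_to_nat {x f : Fin p → ℕ} {r : ℚ} (hr : 0 ≤ r) (h : ι x = r • ι f) :
    ∃ a b : ℕ, 0 < b ∧ b • x = a • f := by
  refine ⟨r.num.toNat, r.den, r.pos, ?_⟩
  apply ι_inj
  rw [ι_nsmul, ι_nsmul, h, smul_smul]
  congr 1
  have hden : ((r.den : ℚ)) ≠ 0 := by exact_mod_cast r.den_ne_zero
  have hnum : r * (r.den : ℚ) = (r.num : ℚ) := by
    nth_rewrite 1 [← Rat.num_div_den r]
    exact div_mul_cancel₀ _ hden
  have h0 : ((r.num.toNat : ℚ)) = (r.num : ℚ) := by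
    exact_mod_cast Int.toNat_of_nonneg (Rat.num_nonneg.2 hr)
  rw [h0, ← hnum]; ring

lemma a_pos {x v : Fin p → ℕ} {a b : ℕ} (hb : 0 < b) (h : b • x = a • v)
    (hx : x ≠ 0) : 0 < a := by
  rcases Nat.eq_zero_or_pos a with ha | ha
  · exfalso
    apply hx
    funext k
    have hk := congrFun h k
    simp only [Pi.smul_apply, smul_eq_mul, ha, zero_mul] at hk
    rcases Nat.mul_eq_zero.1 hk with h | h
    · omega
    · exact h
  · exact ha

lemma ray_isExtremal {F F₀ : Finset (Fin p → ℕ)} {S : Set (Fin p → ℕ)}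
    (hS : S = (AddSubmonoid.closure (F : Set (Fin p → ℕ)) : Set (Fin p → ℕ)))
    (hsub : F₀ ⊆ F) (heq : cQ F₀ = cQ F)
    (hirr : ∀ f ∈ F₀, ι f ∉ cQ (F₀.erase f)) {f : Fin p → ℕ} (hf : f ∈ F₀) :
    IsExtremalRay (coneOf S) (ray (coneOf S) f) := by
  have hfne : f ≠ 0 := by
    intro h0
    apply hirr f hf
    rw [h0, ι_zero]; exact zero_mem_cQ _
  have hfS : f ∈ coneOf S := by
    refine ⟨1, one_pos, ?_⟩
    have : f ∈ S := by
      rw [hS]; exact AddSubmonoid.subset_closure (hsub hf)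
    simpa using AddSubmonoid.subset_closure this
  constructor
  · exact ⟨f, hfne, hfS, rfl⟩
  · rintro x hx y hy ⟨hxyC, a, b, hb, hab⟩
    have hxQ : ι x ∈ cQ F₀ := by rw [heq]; exact cQ_of_mem_coneOf hS hx
    have hyQ : ι y ∈ cQ F₀ := by rw [heq]; exact cQ_of_mem_coneOf hS hy
    have hbne : ((b : ℚ)) ≠ 0 := by exact_mod_cast hb.ne'
    have hq : (0 : ℚ) ≤ (a : ℚ) / (b : ℚ) := by positivity
    have hsum : ι x + ι y = ((a : ℚ) / (b : ℚ)) • ι f := by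
      have h1 : ι (b • (x + y)) = ι (a • f) := by rw [hab]
      rw [ι_nsmul, ι_nsmul, ι_add] at h1
      have := congrArg (fun z => ((b : ℚ))⁻¹ • z) h1
      simp only [smul_smul, inv_mul_cancel₀ hbne, one_smul] at this
      rw [this, div_eq_inv_mul]
    obtain ⟨⟨r, hr, hxr⟩, ⟨r', hr', hyr⟩⟩ := ext_core hirr hf hxQ hyQ hq hsum
    exact ⟨⟨hx, rat_ray_to_nat hr hxr⟩, ⟨hy, rat_ray_to_nat hr' hyr⟩⟩

lemma ray_eq_of_common {C τ₁ τ₂ : Set (Fin p → ℕ)}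
    (h₁ : IsExtremalRay C τ₁) (h₂ : IsExtremalRay C τ₂) {w : Fin p → ℕ}
    (hw : w ≠ 0) (hw1 : w ∈ τ₁) (hw2 : w ∈ τ₂) : τ₁ = τ₂ := by
  obtain ⟨v₁, hv₁ne, hv₁C, hv₁⟩ := h₁.1
  obtain ⟨v₂, hv₂ne, hv₂C, hv₂⟩ := h₂.1
  rw [hv₁] at hw1
  rw [hv₂] at hw2
  obtain ⟨hwC, a₁, b₁, hb₁, he₁⟩ := hw1
  obtain ⟨_, a₂, b₂, hb₂, he₂⟩ := hw2
  have ha₁ : 0 < a₁ := a_pos hb₁ he₁ hw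
  have ha₂ : 0 < a₂ := a_pos hb₂ he₂ hw
  have main : ∀ (vA vB : Fin p → ℕ) (aA bA aB bB : ℕ), 0 < aA → 0 < bB →
      (bA • w = aA • vA) → (bB • w = aB • vB) →
      ∀ x, (x ∈ C ∧ ∃ a b : ℕ, 0 < b ∧ b • x = a • vA) →
        (x ∈ C ∧ ∃ a b : ℕ, 0 < b ∧ b • x = a • vB) := by
    rintro vA vB aA bA aB bB haA hbB heA heB x ⟨hxC, a, b, hbpos, he⟩
    refine ⟨hxC, a * bA * aB, aA * bB * b, by positivity, ?_⟩
    funext k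
    have e1 := congrFun he k
    have e2 := congrFun heA k
    have e3 := congrFun heB k
    simp only [Pi.smul_apply, smul_eq_mul] at e1 e2 e3 ⊢
    zify at e1 e2 e3 ⊢
    linear_combination (aA * bB : ℤ) * e1 - (a * bB : ℤ) * e2 + (a * bA : ℤ) * e3
  have d1 := main v₁ v₂ a₁ b₁ a₂ b₂ ha₁ hb₂ he₁ he₂
  have d2 := main v₂ v₁ a₂ b₂ a₁ b₁ ha₂ hb₁ he₂ he₁
  rw [hv₁, hv₂]
  ext x
  exact ⟨fun h => d1 x h, fun h => d2 x h⟩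

lemma finite_box (N : ℕ) : {v : Fin p → ℕ | ∀ k, v k ≤ N}.Finite := by
  have hsub : {v : Fin p → ℕ | ∀ k, v k ≤ N} ⊆
      Set.pi Set.univ (fun _ => Set.Iic N) := by
    intro v hv k _
    exact hv k
  exact (Set.Finite.pi fun _ => Set.finite_Iic N).subset hsub

lemma subset_coneOf {S : Set (Fin p → ℕ)} : S ⊆ coneOf S := fun x hx =>
  ⟨1, one_pos, by simpa using AddSubmonoid.subset_closure hx⟩

lemma keyFin {t : ℕ} {S : Set (Fin p → ℕ)} {F : Finset (Fin p → ℕ)}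
    (hS : S = (AddSubmonoid.closure (F : Set (Fin p → ℕ)) : Set (Fin p → ℕ)))
    (hG : (coneOf S \ S).Finite)
    {τ : Fin t → Set (Fin p → ℕ)}
    (hray : ∀ ρ, IsExtremalRay (coneOf S) ρ → ∃ i, ρ = τ i)
    {m : Fin t → (Fin p → ℕ)} (hm : ∀ i, m i ∈ S ∧ m i ∈ τ i ∧ m i ≠ 0) :
    {s | s ∈ S ∧ s ≠ 0 ∧ ∀ i, ¬∃ u ∈ S, m i + u = s}.Finite := by
  obtain ⟨F₀, hsub, heq, hirr⟩ := exists_min F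
  have key : ∀ f, f ∈ F₀ → ∃ (i : Fin t) (a b : ℕ), 0 < a ∧ 0 < b ∧
      (b : ℚ) • ι (m i) = (a : ℚ) • ι f := by
    intro f hf
    have hext := ray_isExtremal hS hsub heq hirr hf
    obtain ⟨i, hi⟩ := hray _ hext
    have hmi : m i ∈ ray (coneOf S) f := by rw [hi]; exact (hm i).2.1
    obtain ⟨_, a, b, hb, hab⟩ := hmi
    have ha : 0 < a := a_pos hb hab (hm i).2.2
    refine ⟨i, a, b, ha, hb, ?_⟩
    have h2 : ι (b • m i) = ι (a • f) := by rw [hab]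
    rw [ι_nsmul, ι_nsmul] at h2
    exact h2
  choose I A B hA hB hAB using key
  set N := ∑ f ∈ F₀.attach, A f.1 f.2 * (∑ k, f.1 k) with hN
  apply Set.Finite.subset
    (((Set.finite_iUnion (fun i : Fin t => hG.image (fun g => m i + g)))).union
      (finite_box N))
  rintro s ⟨hsS, hs0, hsnot⟩
  have hsQ : ι s ∈ cQ F₀ := by
    rw [heq]; exact cQ_of_mem_coneOf hS (subset_coneOf hsS)
  obtain ⟨c, hc, hcs⟩ := hsQ
  by_cases hbig : ∃ f, ∃ hf : f ∈ F₀, (A f hf : ℚ) / (B f hf : ℚ) ≤ c f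
  · left
    obtain ⟨f, hf, hle⟩ := hbig
    set i := I f hf with hidef
    set a := A f hf with hadef
    set b := B f hf with hbdef
    have hbne : ((b : ℚ)) ≠ 0 := by exact_mod_cast (hB f hf).ne'
    have hmQ : ι (m i) = ((a : ℚ) / (b : ℚ)) • ι f := by
      have h3 := hAB f hf
      calc ι (m i) = (b : ℚ)⁻¹ • ((b : ℚ) • ι (m i)) := by
            rw [smul_smul, inv_mul_cancel₀ hbne, one_smul]
        _ = (b : ℚ)⁻¹ • ((a : ℚ) • ι f) := by rw [h3]
        _ = ((a : ℚ) / (b : ℚ)) • ι f := by rw [smul_smul, div_eq_inv_mul]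
    set c' : (Fin p → ℕ) → ℚ := fun g => if g = f then c f - (a : ℚ)/(b : ℚ) else c g
      with hc'def
    have hz : ι s - ι (m i) = ∑ g ∈ F₀, c' g • ι g := by
      have hsplit1 : ∑ g ∈ F₀, c' g • ι g =
          c' f • ι f + ∑ g ∈ F₀.erase f, c' g • ι g :=
        (Finset.add_sum_erase _ (fun g => c' g • ι g) hf).symm
      have hsplit2 : ∑ g ∈ F₀, c g • ι g =
          c f • ι f + ∑ g ∈ F₀.erase f, c g • ι g :=
        (Finset.add_sum_erase _ (fun g => c g • ι g) hf).symm
      have herase : ∑ g ∈ F₀.erase f, c' g • ι g =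
          ∑ g ∈ F₀.erase f, c g • ι g :=
        Finset.sum_congr rfl fun g hg => by
          simp [hc'def, Finset.ne_of_mem_erase hg]
      rw [hcs, hmQ, hsplit1, hsplit2, herase]
      have hcf : c' f = c f - (a : ℚ)/(b : ℚ) := by simp [hc'def]
      rw [hcf, sub_smul]
      abel
    have hzQ : ι s - ι (m i) ∈ cQ F₀ := by
      refine ⟨c', fun g => ?_, hz⟩
      by_cases hgf : g = f
      · subst hgf; simp [hc'def]; linarith
      · simp [hc'def, hgf]; exact hc g
    have hms : ∀ k, m i k ≤ s k := by
      intro k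
      have h4 := cQ_nonneg hzQ k
      simp only [Pi.zero_apply, Pi.sub_apply, ι] at h4
      have : (m i k : ℚ) ≤ (s k : ℚ) := by linarith
      exact_mod_cast this
    set u : Fin p → ℕ := s - m i with hudef
    have hmu : m i + u = s := by
      funext k
      simp only [hudef, Pi.add_apply, Pi.sub_apply]
      have := hms k
      omega
    have huι : ι u = ι s - ι (m i) := by
      funext k
      simp only [ι, Pi.sub_apply, hudef]
      have := hms k
      push_cast [Nat.cast_sub this]
      ring
    have huC : u ∈ coneOf S := by
      apply mem_coneOf_of_cQ hS
      rw [huι, ← heq]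
      exact hzQ
    have huS : u ∉ S := fun h => hsnot i ⟨u, h, hmu⟩
    exact Set.mem_iUnion.2 ⟨i, ⟨u, ⟨huC, huS⟩, hmu⟩⟩
  · refine Or.inr ?_
    push_neg at hbig
    intro k
    have h1 : (s k : ℚ) = ∑ f ∈ F₀.attach, c f.1 * (f.1 k : ℚ) := by
      have h0 := congrFun hcs k
      simp only [ι, Finset.sum_apply, Pi.smul_apply, smul_eq_mul] at h0
      rw [h0, ← Finset.sum_attach F₀ (fun f => c f * (f k : ℚ))]
    have h2 : (s k : ℚ) ≤ ∑ f ∈ F₀.attach, (A f.1 f.2 : ℚ) * (∑ k', (f.1 k' : ℚ)) := by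
      rw [h1]
      apply Finset.sum_le_sum
      intro g _
      have hlt := hbig g.1 g.2
      have hBone : (1 : ℚ) ≤ (B g.1 g.2 : ℚ) := by exact_mod_cast hB g.1 g.2
      have hAnn : (0 : ℚ) ≤ (A g.1 g.2 : ℚ) := by positivity
      have hcA : c g.1 ≤ (A g.1 g.2 : ℚ) := le_trans hlt.le (div_le_self hAnn hBone)
      have hk1 : (g.1 k : ℚ) ≤ ∑ k', (g.1 k' : ℚ) :=
        Finset.single_le_sum (f := fun k' => (g.1 k' : ℚ))
          (fun k' _ => by positivity) (Finset.mem_univ k)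
      calc c g.1 * (g.1 k : ℚ) ≤ (A g.1 g.2 : ℚ) * (g.1 k : ℚ) :=
            mul_le_mul_of_nonneg_right hcA (by positivity)
        _ ≤ (A g.1 g.2 : ℚ) * ∑ k', (g.1 k' : ℚ) := mul_le_mul_of_nonneg_left hk1 hAnn
    have h3 : ((N : ℚ)) = ∑ f ∈ F₀.attach, (A f.1 f.2 : ℚ) * (∑ k', (f.1 k' : ℚ)) := by
      rw [hN]; push_cast; rfl
    have h4 : (s k : ℚ) ≤ (N : ℚ) := by rw [h3]; exact h2
    exact_mod_cast h4

end St14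


/-- Given a `𝒞`-semigroup `S` with extremal rays `τ 1, …, τ t` and
`m i ∈ τ i \ {0}` in `S`, the set of `I(S)`-semigroups that are `𝒞`-semigroups
whose `i`-multiplicities are the `m i` is non-empty and finite. -/
theorem statement14 {p t : ℕ} (S : Set (Fin p → ℕ))
    (τ : Fin t → Set (Fin p → ℕ)) (hS : CSemigroup S)
    (hτ : RaysOf (coneOf S) τ) (m : Fin t → (Fin p → ℕ))
    (hm : ∀ i, m i ∈ S ∧ m i ∈ τ i ∧ m i ≠ 0) :
    {T : Set (Fin p → ℕ) | ISemigroupOf S T ∧ CSemigroup T ∧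
        ∀ i, MultOn (τ i) T (m i)}.Nonempty ∧
    {T : Set (Fin p → ℕ) | ISemigroupOf S T ∧ CSemigroup T ∧
        ∀ i, MultOn (τ i) T (m i)}.Finite := by
  classical
  obtain ⟨⟨F, hF⟩, hGfin⟩ := hS
  have hS0 : (0 : Fin p → ℕ) ∈ S := by
    rw [hF]; exact (AddSubmonoid.closure _).zero_mem
  have hSadd : ∀ {x y : Fin p → ℕ}, x ∈ S → y ∈ S → x + y ∈ S := by
    intro x y hx hy
    rw [hF] at hx hy ⊢
    exact AddSubmonoid.add_mem _ hx hy
  have hBfin : {s | s ∈ S ∧ s ≠ 0 ∧ ∀ i, ¬∃ u ∈ S, m i + u = s}.Finite :=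
    St14.keyFin hF hGfin hτ.2.2 hm
  set T₀ : Set (Fin p → ℕ) := {x | x = 0 ∨ ∃ i, ∃ s ∈ S, x = m i + s} with hT₀def
  have hT₀S : T₀ ⊆ S := by
    rintro x (rfl | ⟨i, s, hs, rfl⟩)
    · exact hS0
    · exact hSadd (hm i).1 hs
  have hmner : ∀ (i : Fin t) (s : Fin p → ℕ), m i + s ≠ 0 := by
    intro i s h
    apply (hm i).2.2
    funext k
    have hk := congrFun h k
    simp only [Pi.add_apply, Pi.zero_apply] at hk ⊢
    omega
  have hdiff : S \ T₀ = {s | s ∈ S ∧ s ≠ 0 ∧ ∀ i, ¬∃ u ∈ S, m i + u = s} := by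
    ext s
    constructor
    · rintro ⟨hsS, hsT⟩
      refine ⟨hsS, fun h0 => hsT (Or.inl h0), ?_⟩
      rintro i ⟨u, huS, hmu⟩
      exact hsT (Or.inr ⟨i, u, huS, hmu.symm⟩)
    · rintro ⟨h1, h2, h3⟩
      refine ⟨h1, ?_⟩
      rintro (rfl | ⟨i, u, hu, rfl⟩)
      · exact h2 rfl
      · exact h3 i ⟨u, hu, rfl⟩
  have hDfin : (S \ T₀).Finite := by rw [hdiff]; exact hBfin
  have hT₀0 : (0 : Fin p → ℕ) ∈ T₀ := Or.inl rfl
  have hT₀add : ∀ {x y : Fin p → ℕ}, x ∈ T₀ → y ∈ T₀ → x + y ∈ T₀ := by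
    rintro x y (rfl | ⟨i, s, hs, rfl⟩) hy
    · simpa using hy
    · rcases hy with rfl | ⟨j, s', hs', rfl⟩
      · exact Or.inr ⟨i, s, hs, by rw [add_zero]⟩
      · exact Or.inr ⟨i, s + (m j + s'), hSadd hs (hSadd (hm j).1 hs'), by abel⟩
  have hmiT₀ : ∀ i, m i ∈ T₀ := fun i => Or.inr ⟨i, 0, hS0, (add_zero _).symm⟩
  -- the ideal property for T₀
  have hT₀ideal : IsIdealOf S (T₀ \ {0}) := by
    constructor
    · rintro x ⟨hx, _⟩
      exact hT₀S hx
    · intro z hz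
      rw [Set.mem_add] at hz
      obtain ⟨x, hx, s, hs, rfl⟩ := hz
      obtain ⟨hxT, hx0⟩ := hx
      rcases hxT with rfl | ⟨i, u, hu, rfl⟩
      · exact absurd rfl hx0
      · refine ⟨Or.inr ⟨i, u + s, hSadd hu hs, by abel⟩, ?_⟩
        simp only [Set.mem_singleton_iff]
        have := hmner i (u + s)
        rw [add_assoc]
        exact this
  -- generating set for T₀
  have hGsetfin : (⋃ i, insert (m i) ((fun d => m i + d) '' (S \ T₀))).Finite :=
    Set.finite_iUnion fun i => ((hDfin.image _).insert _)
  set Gs : Set (Fin p → ℕ) := ⋃ i, insert (m i) ((fun d => m i + d) '' (S \ T₀))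
    with hGsdef
  have hGsT₀ : Gs ⊆ T₀ := by
    intro x hx
    rw [hGsdef, Set.mem_iUnion] at hx
    obtain ⟨i, hx⟩ := hx
    rcases Set.mem_insert_iff.1 hx with rfl | ⟨d, hd, rfl⟩
    · exact hmiT₀ i
    · exact Or.inr ⟨i, d, hd.1, rfl⟩
  have hwpos : ∀ i, 0 < ∑ k, m i k := by
    intro i
    rcases Function.ne_iff.1 (hm i).2.2 with ⟨k, hk⟩
    have h1 : 1 ≤ m i k := Nat.pos_of_ne_zero (by simpa using hk)
    calc 0 < m i k := h1
      _ ≤ ∑ k', m i k' := Finset.single_le_sum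
          (f := fun k' => m i k') (fun _ _ => Nat.zero_le _) (Finset.mem_univ k)
  have hT₀closure : T₀ ⊆ (AddSubmonoid.closure Gs : Set (Fin p → ℕ)) := by
    suffices h : ∀ n (x : Fin p → ℕ), (∑ k, x k) ≤ n → x ∈ T₀ →
        x ∈ AddSubmonoid.closure Gs by
      intro x hx
      exact h (∑ k, x k) x le_rfl hx
    intro n
    induction n with
    | zero =>
      intro x hx _
      have : x = 0 := by
        funext k
        have : x k ≤ ∑ k', x k' := Finset.single_le_sum
          (f := fun k' => x k') (fun _ _ => Nat.zero_le _) (Finset.mem_univ k)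
        simp only [Pi.zero_apply]
        omega
      rw [this]
      exact AddSubmonoid.zero_mem _
    | succ n ih =>
      rintro x hx (rfl | ⟨i, s, hs, rfl⟩)
      · exact AddSubmonoid.zero_mem _
      · have hmiGs : m i ∈ Gs := by
          rw [hGsdef]
          exact Set.mem_iUnion.2 ⟨i, Set.mem_insert _ _⟩
        by_cases hsT : s ∈ T₀
        · rcases eq_or_ne s 0 with rfl | hs0
          · rw [add_zero]
            exact AddSubmonoid.subset_closure hmiGs
          · have hsum : (∑ k, (m i + s) k) = (∑ k, m i k) + ∑ k, s k := by
              rw [← Finset.sum_add_distrib]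
              exact Finset.sum_congr rfl fun k _ => rfl
            have hle : (∑ k, s k) ≤ n := by
              have := hwpos i
              omega
            exact AddSubmonoid.add_mem _ (AddSubmonoid.subset_closure hmiGs)
              (ih s hle hsT)
        · have : m i + s ∈ Gs := by
            rw [hGsdef]
            exact Set.mem_iUnion.2 ⟨i, Set.mem_insert_iff.2
              (Or.inr ⟨s, ⟨hs, hsT⟩, rfl⟩)⟩
          exact AddSubmonoid.subset_closure this
  have hT₀eq : T₀ = (AddSubmonoid.closure
      ((hGsetfin.toFinset : Finset (Fin p → ℕ)) : Set (Fin p → ℕ)) :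
        Set (Fin p → ℕ)) := by
    have hcoe : ((hGsetfin.toFinset : Finset (Fin p → ℕ)) : Set (Fin p → ℕ)) = Gs :=
      Set.Finite.coe_toFinset _
    rw [hcoe]
    apply Set.Subset.antisymm hT₀closure
    · let T₀M : AddSubmonoid (Fin p → ℕ) :=
        { carrier := T₀
          add_mem' := fun hx hy => hT₀add hx hy
          zero_mem' := hT₀0 }
      have : AddSubmonoid.closure Gs ≤ T₀M := AddSubmonoid.closure_le.2 hGsT₀
      exact fun x hx => this hx
  have hT₀affine : IsAffine T₀ := ⟨hGsetfin.toFinset, hT₀eq⟩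
  -- cone of T₀
  have hconeT₀ : coneOf T₀ ⊆ coneOf S := by
    rintro x ⟨n, hn, hnx⟩
    refine ⟨n, hn, ?_⟩
    exact AddSubmonoid.closure_mono hT₀S hnx
  have hT₀csg : CSemigroup T₀ := by
    refine ⟨hT₀affine, Set.Finite.subset (hGfin.union hDfin) ?_⟩
    rintro x ⟨hx1, hx2⟩
    by_cases hxS : x ∈ S
    · exact Or.inr ⟨hxS, hx2⟩
    · exact Or.inl ⟨hconeT₀ hx1, hxS⟩
  -- MultOn for T₀
  have hT₀mult : ∀ i, MultOn (τ i) T₀ (m i) := by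
    intro i
    refine ⟨(hm i).2.1, hmiT₀ i, (hm i).2.2, ?_⟩
    rintro x ⟨hxτ, hxT⟩ hx0
    rcases hxT with rfl | ⟨j, s, hs, rfl⟩
    · exact absurd rfl hx0
    · have hmjC : m j ∈ coneOf S := St14.subset_coneOf (hm j).1
      have hsC : s ∈ coneOf S := St14.subset_coneOf hs
      have hext := (hτ.1 i).2 (m j) hmjC s hsC hxτ
      have hji : j = i := by
        by_contra hne
        have hττ : τ j = τ i :=
          St14.ray_eq_of_common (hτ.1 j) (hτ.1 i) (hm j).2.2 (hm j).2.1 hext.1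
        exact hne (hτ.2.1 hττ)
      subst hji
      rw [Pi.le_def]
      intro k
      exact Nat.le_add_right _ _
  constructor
  · exact ⟨T₀, ⟨hT₀affine, hT₀0, hT₀ideal⟩, hT₀csg, hT₀mult⟩
  · -- finiteness
    have hbound : ∀ T ∈ {T : Set (Fin p → ℕ) | ISemigroupOf S T ∧ CSemigroup T ∧
        ∀ i, MultOn (τ i) T (m i)}, T₀ ⊆ T ∧ T ⊆ S := by
      rintro T ⟨⟨hTaff, hT0, hTideal⟩, _, hTmult⟩
      constructor
      · rintro x (rfl | ⟨i, s, hs, rfl⟩)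
        · exact hT0
        · have hmiT : m i ∈ T \ {0} := ⟨(hTmult i).2.1, by
            simpa using (hTmult i).2.2.1⟩
          have : m i + s ∈ T \ {0} :=
            hTideal.2 (Set.add_mem_add hmiT hs)
          exact this.1
      · intro x hx
        rcases eq_or_ne x 0 with rfl | hx0
        · exact hS0
        · exact hTideal.1 ⟨hx, by simpa using hx0⟩
    apply Set.Finite.of_finite_image (f := fun T => T \ T₀)
    · apply Set.Finite.subset hDfin.finite_subsets
      rintro X ⟨T, hT, rfl⟩
      intro x hx
      exact ⟨(hbound T hT).2 hx.1, hx.2⟩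
    · rintro T1 hT1 T2 hT2 h12
      have h12' : T1 \ T₀ = T2 \ T₀ := h12
      ext x
      constructor
      · intro hx
        by_cases hxT₀ : x ∈ T₀
        · exact (hbound T2 hT2).1 hxT₀
        · have : x ∈ T2 \ T₀ := by rw [← h12']; exact ⟨hx, hxT₀⟩
          exact this.1
      · intro hx
        by_cases hxT₀ : x ∈ T₀
        · exact (hbound T1 hT1).1 hxT₀
        · have : x ∈ T1 \ T₀ := by rw [h12']; exact ⟨hx, hxT₀⟩
          exact this.1
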